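/- arXiv:2106.11088 — 2 statements merged into one kernel-verified Lean document; each statement's English description precedes it below -/
import Mathlib

section
/- Let θ₁, θ₂ > 0 with θ₁ + θ₂ < π, let n ≥ 1, let δ > 0, let x, x' ∈ (−θ₁, θ₁) with |x − x'| ≤ δ, and let y₁, …, y_n ∈ (π − θ₂, π + θ₂). Then the vector in ℝⁿ whose l-th entry is (cos(x' − y_l) − cos(x − y_l)) / ((1 − cos(x − y_l)) · (1 − cos(x' − y_l))) has Euclidean norm at most √n · δ / (1 + cos(θ₁ + θ₂))². In particular, if δ = 2π/n, the norm is at most 2π / (√n · (1 + cos(θ₁ + θ₂))²). -/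
open Real

lemma denom_lower (θ₁ θ₂ : ℝ) (hθ₁ : 0 < θ₁) (hθ₂ : 0 < θ₂) (hsum : θ₁ + θ₂ < Real.pi)
    (z w : ℝ) (hz : z ∈ Set.Ioo (-θ₁) θ₁) (hw : w ∈ Set.Ioo (Real.pi - θ₂) (Real.pi + θ₂)) :
    1 + Real.cos (θ₁ + θ₂) ≤ 1 - Real.cos (z - w) := by
  have ht : |z - w + π| ≤ θ₁ + θ₂ := by
    rw [abs_le]
    constructor <;> [nlinarith [hz.1, hw.2]; nlinarith [hz.2, hw.1]]
  have h1 : Real.cos (z - w + π) = -Real.cos (z - w) := Real.cos_add_pi _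
  have h2 : Real.cos (θ₁ + θ₂) ≤ Real.cos (z - w + π) := by
    rw [← Real.cos_abs (z - w + π)]
    exact Real.cos_le_cos_of_nonneg_of_le_pi (abs_nonneg _) hsum.le ht
  linarith

lemma abs_cos_sub_cos_le (a b : ℝ) : |Real.cos a - Real.cos b| ≤ |a - b| := by
  rw [Real.cos_sub_cos]
  have h1 : |Real.sin ((a + b) / 2)| ≤ 1 := Real.abs_sin_le_one _
  have h2 : |Real.sin ((a - b) / 2)| ≤ |(a - b) / 2| := Real.abs_sin_le_abs
  rw [abs_mul, abs_mul, abs_neg, abs_two]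
  calc 2 * |Real.sin ((a + b) / 2)| * |Real.sin ((a - b) / 2)|
      ≤ 2 * 1 * |(a - b) / 2| := by
        apply mul_le_mul _ h2 (abs_nonneg _) (by positivity)
        nlinarith
    _ = |a - b| := by rw [abs_div, abs_two]; ring

/-- bound on the Euclidean norm of the row-difference vector appearing in the
determinant estimate, together with the particular case `δ = 2π/n`. -/
theorem row_difference_norm_bound (θ₁ θ₂ : ℝ) (hθ₁ : 0 < θ₁) (hθ₂ : 0 < θ₂)
    (hsum : θ₁ + θ₂ < Real.pi)
    (n : ℕ) (hn : 1 ≤ n) (δ : ℝ) (hδ : 0 < δ)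
    (x x' : ℝ) (hx : x ∈ Set.Ioo (-θ₁) θ₁) (hx' : x' ∈ Set.Ioo (-θ₁) θ₁)
    (hxx' : |x - x'| ≤ δ)
    (y : Fin n → ℝ) (hy : ∀ l, y l ∈ Set.Ioo (Real.pi - θ₂) (Real.pi + θ₂)) :
    Real.sqrt (∑ l : Fin n,
        ((Real.cos (x' - y l) - Real.cos (x - y l)) /
          ((1 - Real.cos (x - y l)) * (1 - Real.cos (x' - y l)))) ^ 2) ≤
      Real.sqrt n * δ / (1 + Real.cos (θ₁ + θ₂)) ^ 2 ∧
    (δ = 2 * Real.pi / n →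
      Real.sqrt (∑ l : Fin n,
          ((Real.cos (x' - y l) - Real.cos (x - y l)) /
            ((1 - Real.cos (x - y l)) * (1 - Real.cos (x' - y l)))) ^ 2) ≤
        2 * Real.pi / (Real.sqrt n * (1 + Real.cos (θ₁ + θ₂)) ^ 2)) := by
  set c : ℝ := 1 + Real.cos (θ₁ + θ₂) with hc_def
  have hc : 0 < c := by
    have : Real.cos Real.pi < Real.cos (θ₁ + θ₂) :=
      Real.cos_lt_cos_of_nonneg_of_le_pi (by positivity) le_rfl hsum
    rw [Real.cos_pi] at this
    linarith
  have hterm : ∀ l : Fin n,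
      ((Real.cos (x' - y l) - Real.cos (x - y l)) /
        ((1 - Real.cos (x - y l)) * (1 - Real.cos (x' - y l)))) ^ 2 ≤ (δ / c ^ 2) ^ 2 := by
    intro l
    have hd1 := denom_lower θ₁ θ₂ hθ₁ hθ₂ hsum x (y l) hx (hy l)
    have hd2 := denom_lower θ₁ θ₂ hθ₁ hθ₂ hsum x' (y l) hx' (hy l)
    have hnum : |Real.cos (x' - y l) - Real.cos (x - y l)| ≤ δ := by
      calc |Real.cos (x' - y l) - Real.cos (x - y l)| ≤ |(x' - y l) - (x - y l)| :=
            _root_.abs_cos_sub_cos_le _ _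
        _ = |x - x'| := by rw [← abs_neg]; ring_nf
        _ ≤ δ := hxx'
    have habs : |(Real.cos (x' - y l) - Real.cos (x - y l)) /
        ((1 - Real.cos (x - y l)) * (1 - Real.cos (x' - y l)))| ≤ δ / c ^ 2 := by
      rw [abs_div]
      have hden : c ^ 2 ≤ |(1 - Real.cos (x - y l)) * (1 - Real.cos (x' - y l))| := by
        rw [abs_of_nonneg (by nlinarith)]
        nlinarith
      exact div_le_div₀ hδ.le hnum (by positivity) hden
    rw [← sq_abs]
    exact pow_le_pow_left₀ (abs_nonneg _) habs 2
  have hsumle : (∑ l : Fin n,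
      ((Real.cos (x' - y l) - Real.cos (x - y l)) /
        ((1 - Real.cos (x - y l)) * (1 - Real.cos (x' - y l)))) ^ 2) ≤ n * (δ / c ^ 2) ^ 2 := by
    calc _ ≤ ∑ _l : Fin n, (δ / c ^ 2) ^ 2 := Finset.sum_le_sum fun l _ => hterm l
      _ = n * (δ / c ^ 2) ^ 2 := by simp [Finset.sum_const]
  have hmain : Real.sqrt (∑ l : Fin n,
      ((Real.cos (x' - y l) - Real.cos (x - y l)) /
        ((1 - Real.cos (x - y l)) * (1 - Real.cos (x' - y l)))) ^ 2) ≤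
      Real.sqrt n * δ / c ^ 2 := by
    calc _ ≤ Real.sqrt (n * (δ / c ^ 2) ^ 2) := Real.sqrt_le_sqrt hsumle
      _ = Real.sqrt n * (δ / c ^ 2) := by
          rw [Real.sqrt_mul (Nat.cast_nonneg n), Real.sqrt_sq (by positivity)]
      _ = Real.sqrt n * δ / c ^ 2 := by ring
  refine ⟨hmain, fun hδ' => ?_⟩
  have hn' : (0 : ℝ) < n := by exact_mod_cast hn
  have hsq : Real.sqrt n * Real.sqrt n = n := Real.mul_self_sqrt (Nat.cast_nonneg n)
  have hsn : (0 : ℝ) < Real.sqrt n := Real.sqrt_pos.mpr hn'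
  calc _ ≤ Real.sqrt n * δ / c ^ 2 := hmain
    _ = 2 * Real.pi / (Real.sqrt n * c ^ 2) := by
        rw [hδ', show ((n:ℝ)) = Real.sqrt n * Real.sqrt n from hsq.symm]
        rw [Real.sqrt_mul_self hsn.le]
        field_simp
end

section
/- Let θ₁, θ₂ > 0 with θ₁ + θ₂ < π. There exists a constant c = c(θ₁, θ₂) > 0 such that for every integer n ≥ 1 and all points x₁, …, x_n ∈ (−θ₁, θ₁) and y₁, …, y_n ∈ (π − θ₂, π + θ₂), the n×n determinant satisfies |det[ 1 / (1 − cos(x_j − y_l)) ]_{1 ≤ j,l ≤ n}| ≤ cⁿ · (n!)^{−1/2}. In particular, this determinant tends to 0 super-exponentially fast as n → ∞, uniformly over all such configurations of points. -/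
open Finset

/-- Polynomial identity for the derivative-of-geometric partial sum. -/
lemma aux_geom (s : ℝ) (m : ℕ) :
    (1 - s)^2 * (∑ k ∈ Finset.range m, ((k : ℝ) + 1) * s^k)
      = 1 - ((m : ℝ) + 1) * s^m + m * s^(m+1) := by
  induction m with
  | zero => simp
  | succ m ih =>
    rw [Finset.sum_range_succ, mul_add, ih]
    push_cast
    ring

lemma aux_sum_le {s : ℝ} (h0 : 0 ≤ s) (h1 : s < 1) (m : ℕ) :
    ∑ k ∈ Finset.range m, ((k : ℝ) + 1) * s^k ≤ 1 / (1 - s)^2 := by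
  have hs : (0:ℝ) < (1 - s)^2 := pow_pos (sub_pos.2 h1) 2
  rw [le_div_iff₀ hs, mul_comm]
  have h2 : (m:ℝ) * s^(m+1) ≤ (m:ℝ) * s^m := by
    apply mul_le_mul_of_nonneg_left _ (by positivity)
    exact pow_le_pow_of_le_one h0 h1.le (Nat.le_succ m)
  have := aux_geom s m
  nlinarith [pow_nonneg h0 m]

lemma aux_term_le {t : ℝ} (h0 : 0 ≤ t) (h1 : t < 1) (k : ℕ) :
    ((k : ℝ) + 1) * t^k ≤ 1 / (1 - t)^2 := by
  refine le_trans ?_ (aux_sum_le h0 h1 (k+1))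
  exact Finset.single_le_sum (f := fun i : ℕ => ((i:ℝ)+1) * t^i)
    (fun i _ => by positivity) (Finset.self_mem_range_succ k)

/-- Tail formula for `1/(1-x)^2`. -/
lemma aux_tail {x : ℝ} (hx : x ≠ 1) (m : ℕ) :
    (1 / (1 - x))^2 = (∑ k ∈ Finset.range m, ((k : ℝ) + 1) * x^k)
      + (((m : ℝ) + 1) - m * x) * x^m / (1 - x)^2 := by
  have h1x : (1 : ℝ) - x ≠ 0 := sub_ne_zero.2 (Ne.symm hx)
  have h := aux_geom x m
  field_simp
  linear_combination (-1 : ℝ) * h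

/-- Permanent-style bound for determinants with rowwise entry bounds. -/
lemma aux_abs_det_le {n : ℕ} (A : Matrix (Fin n) (Fin n) ℝ) (ρ : Fin n → ℝ)
    (hρ : ∀ j l, |A j l| ≤ ρ j) :
    |A.det| ≤ (n.factorial : ℝ) * ∏ j, ρ j := by
  have hρ0 : ∀ j, 0 ≤ ρ j := by
    intro j
    rcases Nat.eq_zero_or_pos n with h | h
    · exact absurd j.2 (by omega)
    · exact le_trans (abs_nonneg _) (hρ j ⟨0, h⟩)
  rw [Matrix.det_apply]
  refine le_trans (Finset.abs_sum_le_sum_abs _ _) ?_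
  have hterm : ∀ σ : Equiv.Perm (Fin n),
      |Equiv.Perm.sign σ • ∏ i, A (σ i) i| ≤ ∏ j, ρ j := by
    intro σ
    rw [Units.smul_def, zsmul_eq_mul, abs_mul]
    have : |((Equiv.Perm.sign σ : ℤ) : ℝ)| = 1 := by
      rcases Int.units_eq_one_or (Equiv.Perm.sign σ) with h | h <;> simp [h]
    rw [this, one_mul, abs_prod]
    calc ∏ i, |A (σ i) i| ≤ ∏ i, ρ (σ i) :=
          Finset.prod_le_prod (fun i _ => abs_nonneg _) (fun i _ => hρ _ _)
      _ = ∏ j, ρ j := Equiv.prod_comp σ ρ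
  refine le_trans (Finset.sum_le_sum fun σ _ => hterm σ) ?_
  rw [Finset.sum_const, Finset.card_univ, Fintype.card_perm, Fintype.card_fin, nsmul_eq_mul]

/-- A finset of naturals of cardinality `n` has sum at least `0 + 1 + ⋯ + (n-1)`. -/
lemma aux_finset_sum (s : Finset ℕ) : ∑ i ∈ Finset.range s.card, i ≤ ∑ x ∈ s, x := by
  induction s using Finset.strongInduction with
  | _ s ih =>
    rcases s.eq_empty_or_nonempty with rfl | hs
    · simp
    · have hmax := s.max'_mem hs
      have hcard : s.card = (s.erase (s.max' hs)).card + 1 := by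
        have h1 : 1 ≤ s.card := Finset.card_pos.mpr hs
        rw [Finset.card_erase_of_mem hmax]
        omega
      have hsub : s ⊆ Finset.range (s.max' hs + 1) := by
        intro x hx
        simp only [Finset.mem_range]
        exact Nat.lt_succ_of_le (Finset.le_max' s x hx)
      have hm : s.card ≤ s.max' hs + 1 := by
        simpa using Finset.card_le_card hsub
      have herase := ih (s.erase (s.max' hs)) (Finset.erase_ssubset hmax)
      have h2 : (s.erase (s.max' hs)).card ≤ s.max' hs := by
        have h1 : 1 ≤ s.card := Finset.card_pos.mpr hs
        rw [Finset.card_erase_of_mem hmax]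
        omega
      rw [hcard, Finset.sum_range_succ, ← Finset.add_sum_erase s _ hmax]
      omega

lemma aux_inj_sum {n : ℕ} (κ : Fin n → ℕ) (hκ : Function.Injective κ) :
    ∑ i ∈ Finset.range n, i ≤ ∑ j, κ j := by
  classical
  have himg : (Finset.univ.image κ).card = n := by
    rw [Finset.card_image_of_injective _ hκ, Finset.card_univ, Fintype.card_fin]
  have := aux_finset_sum (Finset.univ.image κ)
  rw [himg] at this
  refine le_trans this (le_of_eq ?_)
  rw [Finset.sum_image (fun x _ y _ h => hκ h)]

open Filter Topology

set_option maxHeartbeats 2000000 in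
lemma aux_core {U W : ℝ} (hU : 0 ≤ U) (hW : 0 ≤ W) (ht1 : U * W < 1) {n : ℕ}
    (u w : Fin n → ℝ) (hu : ∀ j, |u j| ≤ U) (hw : ∀ l, |w l| ≤ W) :
    |(Matrix.of fun j l => (1 / (1 - u j * w l))^2).det| ≤
      (n.factorial : ℝ) * Real.sqrt (U * W) ^ (n * (n - 1) / 2)
        * (1 / (1 - Real.sqrt (U * W))^2)^n := by
  classical
  set t := U * W with htdef
  have ht0 : 0 ≤ t := mul_nonneg hU hW
  set s := Real.sqrt t with hsdef
  have hs0 : 0 ≤ s := Real.sqrt_nonneg t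
  have hs1 : s < 1 := by
    have := Real.sqrt_lt_sqrt ht0 ht1
    rwa [Real.sqrt_one] at this
  have hss : s * s = t := Real.mul_self_sqrt ht0
  have ht1' : t < 1 := ht1
  have h1t : (0:ℝ) < 1 - t := sub_pos.2 ht1'
  have huw : ∀ j l, |u j * w l| ≤ t := fun j l => by
    rw [abs_mul]; exact mul_le_mul (hu j) (hw l) (abs_nonneg _) hU
  have huwlt : ∀ j l, u j * w l < 1 := fun j l =>
    lt_of_le_of_lt (le_trans (le_abs_self _) (huw j l)) ht1'
  have hne : ∀ j l, (1:ℝ) - u j * w l ≠ 0 := fun j l => ne_of_gt (sub_pos.2 (huwlt j l))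
  set D : ℕ := n * (n - 1) / 2 with hD
  set T : ℝ := (n.factorial : ℝ) * s ^ D * (1 / (1 - s)^2)^n with hT
  set R : ℕ → ℝ := fun m => ((m:ℝ)+1)^n *
      ((n.factorial : ℝ) * ((2*(m:ℝ)+1) * t^m * (1/(1-t)^2)^n)) with hRdef
  have key : ∀ m : ℕ, (2 * (m:ℝ) + 1) * t^m ≤ 1 →
      |(Matrix.of fun j l => (1 / (1 - u j * w l))^2).det| ≤ T + R m := by
    intro m hm
    set F := (Matrix.detRowAlternating : (Fin n → ℝ) [⋀^Fin n]→ₗ[ℝ] ℝ) with hF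
    set g : Fin n → ℕ → (Fin n → ℝ) := fun j k =>
      if k < m then (fun l => ((k:ℝ) + 1) * (u j)^k * (w l)^k)
      else (fun l => (((m:ℝ) + 1) - m * (u j * w l)) * (u j * w l)^m / (1 - u j * w l)^2)
      with hg
    have hrow : ∀ j, (fun l => (1 / (1 - u j * w l))^2) = ∑ k ∈ Finset.range (m+1), g j k := by
      intro j
      funext l
      rw [Finset.sum_apply, Finset.sum_range_succ]
      have hx : u j * w l ≠ 1 := by
        intro h
        exact hne j l (by rw [h]; ring)
      have h1 : g j m l = (((m:ℝ)+1) - m * (u j * w l)) * (u j * w l)^m / (1 - u j * w l)^2 := by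
        simp only [hg]
        rw [if_neg (lt_irrefl m)]
      have h2 : ∀ k ∈ Finset.range m, g j k l = ((k:ℝ)+1) * (u j * w l)^k := by
        intro k hk
        simp only [hg]
        rw [if_pos (Finset.mem_range.1 hk)]
        rw [mul_pow]; ring
      rw [Finset.sum_congr rfl h2, h1, aux_tail hx m]
    have hdet : (Matrix.of fun j l => (1 / (1 - u j * w l))^2).det
        = ∑ κ ∈ Fintype.piFinset (fun _ : Fin n => Finset.range (m+1)),
            F (fun j => g j (κ j)) := by
      have h0 : (Matrix.of fun j l => (1 / (1 - u j * w l))^2).det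
          = F (fun j => ∑ k ∈ Finset.range (m+1), g j k) := by
        show F _ = F _
        congr 1
        funext j
        exact hrow j
      rw [h0]
      exact F.toMultilinearMap.map_sum_finset g (fun _ => Finset.range (m+1))
    rw [hdet]
    refine le_trans (Finset.abs_sum_le_sum_abs _ _) ?_
    set P := Fintype.piFinset (fun _ : Fin n => Finset.range (m+1)) with hP
    rw [← Finset.sum_filter_add_sum_filter_not P (fun κ => ∀ j, κ j < m)]
    refine add_le_add ?_ ?_
    · -- main part
      have hbound : ∀ κ ∈ P.filter (fun κ => ∀ j, κ j < m),
          |F (fun j => g j (κ j))| ≤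
            (n.factorial : ℝ) * s ^ D * ∏ j, (((κ j:ℝ)+1) * s^(κ j)) := by
        intro κ hκ
        obtain ⟨hκP, hκm⟩ := Finset.mem_filter.1 hκ
        have hgs : (fun j => g j (κ j))
            = fun j => ((((κ j):ℝ) + 1) * (u j)^(κ j)) • (fun l => (w l)^(κ j)) := by
          funext j
          simp only [hg]
          rw [if_pos (hκm j)]
          funext l
          simp only [Pi.smul_apply, smul_eq_mul]
        rw [hgs]
        have hsmul : F (fun j => ((((κ j):ℝ) + 1) * (u j)^(κ j)) • (fun l => (w l)^(κ j)))
            = (∏ j, ((((κ j):ℝ) + 1) * (u j)^(κ j))) • F (fun j => fun l => (w l)^(κ j)) :=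
          F.toMultilinearMap.map_smul_univ _ _
        rw [hsmul, smul_eq_mul, abs_mul, abs_prod]
        by_cases hinj : Function.Injective κ
        · have hWdet : |F (fun j => fun l => (w l)^(κ j))| ≤ (n.factorial:ℝ) * ∏ j, W^(κ j) := by
            have hmm : F (fun j => fun l => (w l)^(κ j))
                = (Matrix.of fun j l => (w l)^(κ j)).det := rfl
            rw [hmm]
            refine aux_abs_det_le _ _ (fun j l => ?_)
            rw [Matrix.of_apply, abs_pow]
            exact pow_le_pow_left₀ (abs_nonneg _) (hw l) _
          have h1 : ∏ j, |(((κ j):ℝ) + 1) * (u j)^(κ j)| ≤ ∏ j, ((((κ j):ℝ) + 1) * U^(κ j)) := by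
            refine Finset.prod_le_prod (fun j _ => abs_nonneg _) (fun j _ => ?_)
            rw [abs_mul, abs_pow, abs_of_nonneg (by positivity : (0:ℝ) ≤ ((κ j):ℝ) + 1)]
            exact mul_le_mul_of_nonneg_left (pow_le_pow_left₀ (abs_nonneg _) (hu j) _)
              (by positivity)
          calc (∏ j, |(((κ j):ℝ) + 1) * (u j)^(κ j)|) * |F (fun j => fun l => (w l)^(κ j))|
              ≤ (∏ j, ((((κ j):ℝ) + 1) * U^(κ j))) * ((n.factorial:ℝ) * ∏ j, W^(κ j)) := by
                refine mul_le_mul h1 hWdet (abs_nonneg _) ?_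
                refine Finset.prod_nonneg (fun j _ => by positivity)
            _ = (n.factorial:ℝ) * ((∏ j, ((((κ j):ℝ) + 1) * s^(κ j))) * s ^ (∑ j, κ j)) := by
                rw [← Finset.prod_pow_eq_pow_sum, ← Finset.prod_mul_distrib,
                  mul_left_comm, ← Finset.prod_mul_distrib]
                congr 1
                refine Finset.prod_congr rfl (fun j _ => ?_)
                have huws : U^(κ j) * W^(κ j) = s^(κ j) * s^(κ j) := by
                  rw [← mul_pow, ← mul_pow, hss]
                calc ((κ j:ℝ) + 1) * U^(κ j) * W^(κ j)
                    = ((κ j:ℝ) + 1) * (U^(κ j) * W^(κ j)) := by ring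
                  _ = ((κ j:ℝ) + 1) * s^(κ j) * s^(κ j) := by rw [huws]; ring
            _ ≤ (n.factorial:ℝ) * ((∏ j, ((((κ j):ℝ) + 1) * s^(κ j))) * s ^ D) := by
                refine mul_le_mul_of_nonneg_left ?_ (by positivity)
                refine mul_le_mul_of_nonneg_left ?_
                  (Finset.prod_nonneg (fun j _ => by positivity))
                refine pow_le_pow_of_le_one hs0 hs1.le ?_
                rw [hD, ← Finset.sum_range_id]
                exact aux_inj_sum κ hinj
            _ = (n.factorial:ℝ) * s ^ D * ∏ j, (((κ j:ℝ)+1) * s^(κ j)) := by ring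
        · obtain ⟨a, b, hab, hab'⟩ := Function.not_injective_iff.1 hinj
          have hz : F (fun j => fun l => (w l)^(κ j)) = 0 := by
            refine F.map_eq_zero_of_eq _ ?_ hab'
            rw [hab]
          rw [hz, abs_zero, mul_zero]
          positivity
      refine le_trans (Finset.sum_le_sum hbound) ?_
      refine le_trans (Finset.sum_le_sum_of_subset_of_nonneg (Finset.filter_subset _ _)
        (fun κ _ _ => by positivity)) ?_
      rw [← Finset.mul_sum]
      have hps : ∑ κ ∈ P, ∏ j, (((κ j : ℕ):ℝ)+1) * s^(κ j)
          = ∏ _j : Fin n, (∑ k ∈ Finset.range (m+1), (((k:ℕ):ℝ)+1) * s^k) :=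
        (Finset.prod_univ_sum (fun _ => Finset.range (m+1))
          (fun _ k => (((k:ℕ):ℝ)+1) * s^k)).symm
      rw [hps, hT]
      have hsum : ∏ _j : Fin n, (∑ k ∈ Finset.range (m+1), (((k:ℕ):ℝ)+1) * s^k)
          ≤ (1/(1-s)^2)^n := by
        have hconst : ((1:ℝ)/(1-s)^2)^n = ∏ _j : Fin n, ((1:ℝ)/(1-s)^2) := by
          rw [Finset.prod_const, Finset.card_univ, Fintype.card_fin]
        rw [hconst]
        refine Finset.prod_le_prod (fun j _ => ?_) (fun j _ => aux_sum_le hs0 hs1 (m+1))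
        exact Finset.sum_nonneg (fun k _ => by positivity)
      exact mul_le_mul_of_nonneg_left hsum (by positivity)
    · -- remainder part
      have hboundB : ∀ κ ∈ P.filter (fun κ => ¬ ∀ j, κ j < m),
          |F (fun j => g j (κ j))| ≤
            (n.factorial:ℝ) * ((2*(m:ℝ)+1) * t^m * (1/(1-t)^2)^n) := by
        intro κ hκ
        obtain ⟨hκP, hκm⟩ := Finset.mem_filter.1 hκ
        obtain ⟨j₀, hj₀⟩ := not_forall.1 hκm
        have hn1 : 1 ≤ n := j₀.pos
        set ρ : Fin n → ℝ := fun j =>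
          if κ j < m then 1/(1-t)^2 else (2*(m:ℝ)+1) * t^m / (1-t)^2 with hρ
        have hρ0 : ∀ j, 0 ≤ ρ j := by
          intro j
          simp only [hρ]
          split <;> positivity
        have hent : ∀ j l, |g j (κ j) l| ≤ ρ j := by
          intro j l
          simp only [hg, hρ]
          by_cases hj : κ j < m
          · rw [if_pos hj, if_pos hj]
            rw [abs_mul, abs_mul, abs_pow, abs_pow,
              abs_of_nonneg (by positivity : (0:ℝ) ≤ ((κ j):ℝ) + 1)]
            have h1 : |u j|^(κ j) * |w l|^(κ j) ≤ t^(κ j) := by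
              rw [← mul_pow]
              refine pow_le_pow_left₀ (by positivity) ?_ _
              exact mul_le_mul (hu j) (hw l) (abs_nonneg _) hU
            calc (((κ j):ℝ) + 1) * |u j|^(κ j) * |w l|^(κ j)
                ≤ (((κ j):ℝ) + 1) * t^(κ j) := by
                  rw [mul_assoc]
                  exact mul_le_mul_of_nonneg_left h1 (by positivity)
              _ ≤ 1/(1-t)^2 := aux_term_le ht0 ht1' _
          · rw [if_neg hj, if_neg hj]
            have hx := huw j l
            have hxlt := huwlt j l
            have hd0 : (0:ℝ) < (1-t)^2 := pow_pos h1t 2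
            have hd1 : (0:ℝ) < (1 - u j * w l)^2 := pow_pos (sub_pos.2 hxlt) 2
            have hden : (1-t)^2 ≤ (1 - u j * w l)^2 := by
              have h1 : 1 - t ≤ 1 - u j * w l := by
                have : u j * w l ≤ t := le_trans (le_abs_self _) hx
                linarith
              exact pow_le_pow_left₀ h1t.le h1 2
            have hnum : |((m:ℝ) + 1) - m * (u j * w l)| * |u j * w l|^m
                ≤ (2*(m:ℝ)+1) * t^m := by
              have h2 : |(m:ℝ) * (u j * w l)| ≤ (m:ℝ) * t := by
                rw [abs_mul, abs_of_nonneg (by positivity : (0:ℝ) ≤ (m:ℝ))]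
                exact mul_le_mul_of_nonneg_left hx (by positivity)
              have h4 : (m:ℝ) * t ≤ (m:ℝ) := mul_le_of_le_one_right (by positivity) ht1'.le
              have h2' := abs_le.1 (le_trans h2 h4)
              have h1 : |((m:ℝ) + 1) - m * (u j * w l)| ≤ 2*(m:ℝ)+1 := by
                rw [abs_le]
                constructor <;> linarith [h2'.1, h2'.2]
              have h5 : |u j * w l|^m ≤ t^m := pow_le_pow_left₀ (abs_nonneg _) hx m
              exact mul_le_mul h1 h5 (by positivity) (by positivity)
            rw [abs_div, abs_mul, abs_pow, abs_of_nonneg hd1.le]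
            exact div_le_div₀ (by positivity) hnum hd0 hden
        have hFdet : F (fun j => g j (κ j)) = (Matrix.of fun j l => g j (κ j) l).det := rfl
        have h1 : |F (fun j => g j (κ j))| ≤ (n.factorial:ℝ) * ∏ j, ρ j := by
          rw [hFdet]
          exact aux_abs_det_le _ _ (fun j l => hent j l)
        refine le_trans h1 ?_
        refine mul_le_mul_of_nonneg_left ?_ (by positivity)
        -- ∏ ρ ≤ (2m+1) t^m (1/(1-t)^2)^n
        set ρ' : Fin n → ℝ := fun j =>
          if j = j₀ then (2*(m:ℝ)+1) * t^m / (1-t)^2 else 1/(1-t)^2 with hρ'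
        have hρρ' : ∀ j ∈ Finset.univ, ρ j ≤ ρ' j := by
          intro j _
          simp only [hρ, hρ']
          by_cases hj : j = j₀
          · rw [if_pos hj, hj, if_neg hj₀]
          · rw [if_neg hj]
            by_cases hjm : κ j < m
            · rw [if_pos hjm]
            · rw [if_neg hjm]
              calc (2*(m:ℝ)+1) * t^m / (1-t)^2 ≤ 1 / (1-t)^2 :=
                    (div_le_div_iff_of_pos_right (pow_pos h1t 2)).2 hm
                _ = 1/(1-t)^2 := rfl
        have hp1 : ∏ j, ρ j ≤ ∏ j, ρ' j := Finset.prod_le_prod (fun j _ => hρ0 j) hρρ'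
        have hp2 : ∏ j, ρ' j = (2*(m:ℝ)+1) * t^m * (1/(1-t)^2)^n := by
          rw [← Finset.mul_prod_erase Finset.univ ρ' (Finset.mem_univ j₀)]
          have he : ∏ j ∈ Finset.univ.erase j₀, ρ' j = (1/(1-t)^2)^(n-1) := by
            rw [Finset.prod_congr rfl (fun j hj => ?_), Finset.prod_const,
              Finset.card_erase_of_mem (Finset.mem_univ j₀), Finset.card_univ,
              Fintype.card_fin]
            simp only [hρ']
            rw [if_neg (Finset.mem_erase.1 hj).1]
          rw [he]
          simp only [hρ', eq_self_iff_true, if_true]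
          have hn : n - 1 + 1 = n := Nat.succ_pred_eq_of_pos hn1
          have hpow : ((1:ℝ)/(1-t)^2)^n = ((1:ℝ)/(1-t)^2)^(n-1) * ((1:ℝ)/(1-t)^2) := by
            rw [← pow_succ, hn]
          rw [hpow]
          ring
        rw [hp2] at hp1
        exact hp1
      refine le_trans (Finset.sum_le_card_nsmul _ _ _ hboundB) ?_
      rw [nsmul_eq_mul]
      show _ ≤ ((m:ℝ)+1)^n * ((n.factorial : ℝ) * ((2*(m:ℝ)+1) * t^m * (1/(1-t)^2)^n))
      have hcard : ((P.filter (fun κ => ¬ ∀ j, κ j < m)).card : ℝ) ≤ ((m:ℝ)+1)^n := by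
        have h1 : (P.filter (fun κ => ¬ ∀ j, κ j < m)).card ≤ P.card :=
          Finset.card_filter_le _ _
        have h2 : P.card = (m+1)^n := by
          rw [hP, Fintype.card_piFinset]
          simp [Finset.card_range]
        rw [h2] at h1
        calc ((P.filter (fun κ => ¬ ∀ j, κ j < m)).card : ℝ) ≤ (((m+1)^n : ℕ) : ℝ) := by
              exact_mod_cast h1
          _ = ((m:ℝ)+1)^n := by push_cast; ring
      refine le_trans (mul_le_mul_of_nonneg_right hcard (by positivity)) ?_
      exact le_of_eq (by ring)
  -- now take the limit in m
  have htend0 : Tendsto (fun m : ℕ => ((m:ℝ))^(n+1) * t^m) atTop (𝓝 0) :=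
    tendsto_pow_const_mul_const_pow_of_lt_one (n+1) ht0 ht1'
  have htend1 : Tendsto (fun m : ℕ => ((m:ℝ))^1 * t^m) atTop (𝓝 0) :=
    tendsto_pow_const_mul_const_pow_of_lt_one 1 ht0 ht1'
  have h2m : Tendsto (fun m : ℕ => (2*(m:ℝ)+1) * t^m) atTop (𝓝 0) := by
    have hsq : Tendsto (fun m : ℕ => (3:ℝ) * (((m:ℝ))^1 * t^m)) atTop (𝓝 0) := by
      have h := htend1.const_mul (3:ℝ)
      rw [mul_zero] at h
      exact h
    refine squeeze_zero' ?_ ?_ hsq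
    · filter_upwards [eventually_ge_atTop 0] with m _
      positivity
    · filter_upwards [eventually_ge_atTop 1] with m hm1
      have : (1:ℝ) ≤ (m:ℝ) := by exact_mod_cast hm1
      have h0 : (0:ℝ) ≤ t^m := by positivity
      nlinarith
  have hRtend : Tendsto R atTop (𝓝 0) := by
    have hC : (0:ℝ) ≤ (n.factorial : ℝ) * (1/(1-t)^2)^n := by positivity
    have hsq : Tendsto (fun m : ℕ =>
        ((n.factorial : ℝ) * (1/(1-t)^2)^n * (2^n * 3)) * (((m:ℝ))^(n+1) * t^m))
        atTop (𝓝 0) := by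
      have h := htend0.const_mul ((n.factorial : ℝ) * (1/(1-t)^2)^n * (2^n * 3))
      rw [mul_zero] at h
      exact h
    refine squeeze_zero' ?_ ?_ hsq
    · filter_upwards [eventually_ge_atTop 0] with m _
      rw [hRdef]
      positivity
    · filter_upwards [eventually_ge_atTop 1] with m hm1
      have hm1' : (1:ℝ) ≤ (m:ℝ) := by exact_mod_cast hm1
      rw [hRdef]
      have e1 : ((m:ℝ)+1)^n ≤ (2*(m:ℝ))^n := by
        refine pow_le_pow_left₀ (by positivity) (by linarith) n
      have e2 : (2*(m:ℝ)+1) ≤ 3*(m:ℝ) := by linarith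
      have h0 : (0:ℝ) ≤ t^m := by positivity
      have h1 : (0:ℝ) ≤ (1/(1-t)^2)^n := by positivity
      calc ((m:ℝ)+1)^n * ((n.factorial : ℝ) * ((2*(m:ℝ)+1) * t^m * (1/(1-t)^2)^n))
          ≤ (2*(m:ℝ))^n * ((n.factorial : ℝ) * ((3*(m:ℝ)) * t^m * (1/(1-t)^2)^n)) := by
            refine mul_le_mul e1 ?_ (by positivity) (by positivity)
            refine mul_le_mul_of_nonneg_left ?_ (by positivity)
            refine mul_le_mul_of_nonneg_right ?_ h1
            exact mul_le_mul_of_nonneg_right e2 h0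
        _ = ((n.factorial : ℝ) * (1/(1-t)^2)^n * (2^n * 3)) * (((m:ℝ))^(n+1) * t^m) := by
            rw [mul_pow]
            ring
  have hev : ∀ᶠ m in atTop,
      |(Matrix.of fun j l => (1 / (1 - u j * w l))^2).det| ≤ T + R m := by
    filter_upwards [h2m.eventually_le_const one_pos] with m hm
    exact key m hm
  have hfin := ge_of_tendsto (f := fun m => T + R m) (by simpa using tendsto_const_nhds.add hRtend) hev
  exact hfin

lemma aux_tan_abs {a b : ℝ} (h : |a| < b) (hb : b < Real.pi/2) :
    |Real.tan a| ≤ Real.tan b := by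
  have h0 : |a| < Real.pi/2 := h.trans hb
  have habs : |Real.tan a| = Real.tan |a| := by
    rcases le_or_gt 0 a with ha | ha
    · rw [abs_of_nonneg ha, abs_of_nonneg]
      exact Real.tan_nonneg_of_nonneg_of_le_pi_div_two ha
        (by rw [abs_of_nonneg ha] at h0; linarith)
    · have hna : 0 ≤ -a := by linarith
      have h1 : |a| = -a := abs_of_neg ha
      have h2 : 0 ≤ Real.tan (-a) := Real.tan_nonneg_of_nonneg_of_le_pi_div_two hna
        (by rw [h1] at h0; linarith)
      rw [Real.tan_neg] at h2
      rw [h1, Real.tan_neg, abs_of_nonpos (by linarith)]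
  rw [habs]
  exact (Real.tan_lt_tan_of_nonneg_of_lt_pi_div_two (abs_nonneg a) hb h).le

lemma aux_half_sq (z : ℝ) : 1 - Real.cos z = 2 * Real.sin (z/2)^2 := by
  have h1 : z = 2 * (z/2) := by ring
  have h2 := Real.cos_two_mul' (z/2)
  have h3 := Real.sin_sq_add_cos_sq (z/2)
  nlinarith [h2, h3, congrArg Real.cos h1]

lemma aux_entry' (c1 s1 c2 s2 : ℝ) (hc1 : c1 ≠ 0) (hs2 : s2 ≠ 0)
    (hT : 1 - (s1/c1)*(c2/s2) ≠ 0) :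
    1/(2*(s1*c2 - c1*s2)^2) = (1/(2*c1^2)) * ((1/s2^2) * (1/(1 - (s1/c1)*(c2/s2)))^2) := by
  have key0 : s1*c2 - c1*s2 = c1*s2*((s1/c1)*(c2/s2) - 1) := by
    field_simp
  have key : (s1*c2 - c1*s2)^2 = c1^2*s2^2*(1 - (s1/c1)*(c2/s2))^2 := by
    rw [key0]; ring
  rw [key]
  generalize (1 - (s1/c1)*(c2/s2)) = A at hT ⊢
  field_simp

lemma aux_entry (x y : ℝ) (hcx : Real.cos (x/2) ≠ 0) (hsy : Real.sin (y/2) ≠ 0)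
    (hne : (1:ℝ) - Real.tan (x/2) * (Real.cos (y/2) / Real.sin (y/2)) ≠ 0) :
    1/(1 - Real.cos (x - y)) =
      (1/(2 * Real.cos (x/2)^2)) * ((1/ Real.sin (y/2)^2) *
        (1/(1 - Real.tan (x/2) * (Real.cos (y/2)/Real.sin (y/2))))^2) := by
  have h1 : 1 - Real.cos (x - y) = 2 * Real.sin (x/2 - y/2)^2 := by
    have h := aux_half_sq (x - y)
    have h2 : (x - y)/2 = x/2 - y/2 := by ring
    rw [h2] at h
    exact h
  rw [h1, Real.sin_sub, Real.tan_eq_sin_div_cos]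
  exact aux_entry' _ _ _ _ hcx hsy (by rwa [Real.tan_eq_sin_div_cos] at hne)

lemma aux_exists_bound (C r : ℝ) (h0 : 0 ≤ r) (h1 : r < 1) :
    ∃ K, ∀ k : ℕ, C * ((k:ℝ)+1)^2 * r^k ≤ K := by
  have hbase : Filter.Tendsto (fun k : ℕ => ((k:ℝ)+1)^2 * r^k)
      Filter.atTop (nhds 0) := by
    have t2 := tendsto_pow_const_mul_const_pow_of_lt_one 2 h0 h1
    have t1 := (tendsto_pow_const_mul_const_pow_of_lt_one 1 h0 h1).const_mul (2:ℝ)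
    have t0 := tendsto_pow_const_mul_const_pow_of_lt_one 0 h0 h1
    rw [mul_zero] at t1
    have hadd := (t2.add t1).add t0
    rw [add_zero, add_zero] at hadd
    refine hadd.congr (fun k => ?_)
    ring
  have htend := hbase.const_mul C
  rw [mul_zero] at htend
  have hbd := htend.bddAbove_range
  obtain ⟨K, hK⟩ := hbd
  refine ⟨K, fun k => ?_⟩
  have := hK (Set.mem_range_self (f := fun k : ℕ => C * (((k:ℝ)+1)^2 * r^k)) k)
  calc C * ((k:ℝ)+1)^2 * r^k = C * (((k:ℝ)+1)^2 * r^k) := by ring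
    _ ≤ K := this

set_option maxHeartbeats 1000000 in
/-- super-exponential decay (in `n`, uniformly over configurations) of the
determinant `det[1/(1 − cos(x_j − y_l))]`. -/
theorem det_one_sub_cos_inv_superexp_decay (θ₁ θ₂ : ℝ) (hθ₁ : 0 < θ₁) (hθ₂ : 0 < θ₂)
    (hsum : θ₁ + θ₂ < Real.pi) :
    ∃ c : ℝ, 0 < c ∧ ∀ (n : ℕ), 1 ≤ n → ∀ (x y : Fin n → ℝ),
      (∀ j, x j ∈ Set.Ioo (-θ₁) θ₁) →
      (∀ l, y l ∈ Set.Ioo (Real.pi - θ₂) (Real.pi + θ₂)) →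
      |(Matrix.of fun j l : Fin n => 1 / (1 - Real.cos (x j - y l))).det| ≤
        c ^ n / Real.sqrt (n.factorial) := by
  have hpi := Real.pi_pos
  have hθ1π : θ₁ < Real.pi := by linarith
  have hθ2π : θ₂ < Real.pi := by linarith
  set U := Real.tan (θ₁/2) with hUdef
  set W := Real.tan (θ₂/2) with hWdef
  have hU0 : 0 < U := Real.tan_pos_of_pos_of_lt_pi_div_two (by linarith) (by linarith)
  have hW0 : 0 < W := Real.tan_pos_of_pos_of_lt_pi_div_two (by linarith) (by linarith)
  have hcA : 0 < Real.cos (θ₁/2) := Real.cos_pos_of_mem_Ioo ⟨by linarith, by linarith⟩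
  have hcB : 0 < Real.cos (θ₂/2) := Real.cos_pos_of_mem_Ioo ⟨by linarith, by linarith⟩
  have htUW : U * W < 1 := by
    have hcAB : 0 < Real.cos (θ₁/2 + θ₂/2) := Real.cos_pos_of_mem_Ioo
      ⟨by linarith, by linarith⟩
    have hadd := Real.cos_add (θ₁/2) (θ₂/2)
    have hsin : Real.sin (θ₁/2) * Real.sin (θ₂/2) <
        Real.cos (θ₁/2) * Real.cos (θ₂/2) := by linarith
    rw [hUdef, hWdef, Real.tan_eq_sin_div_cos, Real.tan_eq_sin_div_cos,
      div_mul_div_comm, div_lt_one (by positivity)]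
    exact hsin
  set t := U * W with htdef
  have ht0 : 0 ≤ t := by positivity
  set s := Real.sqrt t with hsdef
  have hs0 : 0 ≤ s := Real.sqrt_nonneg t
  have hs1 : s < 1 := by
    have := Real.sqrt_lt_sqrt ht0 htUW
    rwa [Real.sqrt_one] at this
  set r := Real.sqrt s with hrdef
  have hr0 : 0 ≤ r := Real.sqrt_nonneg s
  have hr1 : r < 1 := by
    have := Real.sqrt_lt_sqrt hs0 hs1
    rwa [Real.sqrt_one] at this
  have hrr : r * r = s := Real.mul_self_sqrt hs0
  set PC := 1/(2*Real.cos (θ₁/2)^2) with hPCdef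
  set QC := 1/Real.cos (θ₂/2)^2 with hQCdef
  set BC := (1:ℝ)/(1-s)^2 with hBCdef
  have hPC0 : 0 < PC := by positivity
  have hQC0 : 0 < QC := by positivity
  have hBC0 : 0 < BC := by
    rw [hBCdef]
    have : (0:ℝ) < 1 - s := by linarith
    positivity
  obtain ⟨K, hK⟩ := aux_exists_bound (PC*QC*BC) r hr0 hr1
  refine ⟨max 1 K, lt_of_lt_of_le one_pos (le_max_left 1 K), ?_⟩
  set c := max 1 K with hcdef
  have hc1 : (1:ℝ) ≤ c := le_max_left 1 K
  intro n hn x y hx hy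
  -- substitution
  set u : Fin n → ℝ := fun j => Real.tan (x j / 2) with hudef
  set w : Fin n → ℝ := fun l => Real.cos (y l / 2) / Real.sin (y l / 2) with hwdef
  have hxb : ∀ j, |x j / 2| < θ₁/2 := by
    intro j
    obtain ⟨h1, h2⟩ := hx j
    rw [abs_lt]
    constructor <;> linarith
  have hyb : ∀ l, |y l / 2 - Real.pi/2| < θ₂/2 := by
    intro l
    obtain ⟨h1, h2⟩ := hy l
    rw [abs_lt]
    constructor <;> linarith
  have hu : ∀ j, |u j| ≤ U := fun j => aux_tan_abs (hxb j) (by linarith)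
  have hcosx : ∀ j, Real.cos (θ₁/2) ≤ Real.cos (x j / 2) := by
    intro j
    rw [← Real.cos_abs (x j / 2)]
    exact Real.cos_le_cos_of_nonneg_of_le_pi (abs_nonneg _) (by linarith) (hxb j).le
  have hsiny : ∀ l, Real.cos (θ₂/2) ≤ Real.sin (y l / 2) := by
    intro l
    have h1 : Real.sin (y l / 2) = Real.cos (y l / 2 - Real.pi/2) := by
      rw [Real.cos_sub_pi_div_two]
    rw [h1, ← Real.cos_abs (y l / 2 - Real.pi/2)]
    exact Real.cos_le_cos_of_nonneg_of_le_pi (abs_nonneg _) (by linarith) (hyb l).le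
  have hcosx0 : ∀ j, (0:ℝ) < Real.cos (x j / 2) := fun j => lt_of_lt_of_le hcA (hcosx j)
  have hsiny0 : ∀ l, (0:ℝ) < Real.sin (y l / 2) := fun l => lt_of_lt_of_le hcB (hsiny l)
  have hw : ∀ l, |w l| ≤ W := by
    intro l
    have h2 : Real.cos (y l / 2) = - Real.sin (y l / 2 - Real.pi/2) := by
      have h := Real.cos_add_pi_div_two (y l / 2 - Real.pi/2)
      rw [sub_add_cancel] at h
      exact h
    have h3 : Real.sin (y l / 2) = Real.cos (y l / 2 - Real.pi/2) := by
      have h := Real.sin_add_pi_div_two (y l / 2 - Real.pi/2)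
      rw [sub_add_cancel] at h
      exact h
    have h4 : w l = - Real.tan (y l / 2 - Real.pi/2) := by
      rw [hwdef]
      simp only
      rw [h2, h3, Real.tan_eq_sin_div_cos, neg_div]
    rw [h4, abs_neg]
    exact aux_tan_abs (hyb l) (by linarith)
  have huw1 : ∀ j l, (1:ℝ) - u j * w l ≠ 0 := by
    intro j l
    have h1 : |u j * w l| ≤ t := by
      rw [abs_mul]
      exact mul_le_mul (hu j) (hw l) (abs_nonneg _) hU0.le
    have : u j * w l < 1 := lt_of_le_of_lt (le_trans (le_abs_self _) h1) htUW
    intro hz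
    linarith [sub_eq_zero.1 hz]
  -- matrix factorization
  set p : Fin n → ℝ := fun j => 1/(2 * Real.cos (x j / 2)^2) with hpdef
  set q : Fin n → ℝ := fun l => 1/Real.sin (y l / 2)^2 with hqdef
  set N : Matrix (Fin n) (Fin n) ℝ := Matrix.of fun j l => (1/(1 - u j * w l))^2 with hNdef
  have hMeq : (Matrix.of fun j l : Fin n => 1 / (1 - Real.cos (x j - y l)))
      = Matrix.of (fun j l : Fin n => p j * ((Matrix.of fun j l => q l * N j l) j l)) := by
    ext j l
    simp only [Matrix.of_apply]
    rw [aux_entry (x j) (y l) (ne_of_gt (hcosx0 j)) (ne_of_gt (hsiny0 l)) (huw1 j l)]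
    rw [hpdef, hqdef, hNdef]
    simp only [Matrix.of_apply]
    rfl
  have hdet1 : (Matrix.of fun j l : Fin n => 1 / (1 - Real.cos (x j - y l))).det
      = (∏ j, p j) * ((∏ l, q l) * N.det) := by
    rw [hMeq, Matrix.det_mul_column p, Matrix.det_mul_row q]
  -- bounds on prefactors
  have hp : ∀ j, 0 < p j ∧ p j ≤ PC := by
    intro j
    constructor
    · have := hcosx0 j; positivity
    · rw [hpdef, hPCdef]
      simp only
      apply one_div_le_one_div_of_le (by positivity)
      have := pow_le_pow_left₀ hcA.le (hcosx j) 2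
      linarith
  have hq : ∀ l, 0 < q l ∧ q l ≤ QC := by
    intro l
    constructor
    · have := hsiny0 l; positivity
    · rw [hqdef, hQCdef]
      simp only
      apply one_div_le_one_div_of_le (by positivity)
      exact pow_le_pow_left₀ hcB.le (hsiny l) 2
  have hprodp : ∏ j, p j ≤ PC^n := by
    have hc : PC^n = ∏ _j : Fin n, PC := by
      rw [Finset.prod_const, Finset.card_univ, Fintype.card_fin]
    rw [hc]
    exact Finset.prod_le_prod (fun j _ => (hp j).1.le) (fun j _ => (hp j).2)
  have hprodq : ∏ l, q l ≤ QC^n := by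
    have hc : QC^n = ∏ _l : Fin n, QC := by
      rw [Finset.prod_const, Finset.card_univ, Fintype.card_fin]
    rw [hc]
    exact Finset.prod_le_prod (fun l _ => (hq l).1.le) (fun l _ => (hq l).2)
  have hdetN := aux_core hU0.le hW0.le htUW u w hu hw
  rw [← htdef, ← hsdef, ← hBCdef] at hdetN
  -- numeric facts
  have hn0 : (0:ℝ) < (n:ℝ) := by exact_mod_cast hn
  have hfn : (n.factorial:ℝ) ≤ (n:ℝ)^n := by exact_mod_cast Nat.factorial_le_pow n
  have hsq : Real.sqrt (n.factorial:ℝ) ≤ Real.sqrt (n:ℝ)^n := by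
    have h2 := Real.sqrt_le_sqrt hfn
    have h4 : ((Real.sqrt (n:ℝ))^n)^2 = (n:ℝ)^n := by
      rw [← pow_mul, mul_comm, pow_mul, Real.sq_sqrt hn0.le]
    have h3 : Real.sqrt ((n:ℝ)^n) = Real.sqrt (n:ℝ)^n := by
      rw [← h4, Real.sqrt_sq (by positivity)]
    rwa [h3] at h2
  have hsD : s^(n*(n-1)/2) = (r^(n-1))^n := by
    have heven : Even (n * (n-1)) := by
      rcases n with _ | k
      · simp
      · simpa [Nat.succ_sub_one, mul_comm] using Nat.even_mul_succ_self k
    have h2 : 2 * (n*(n-1)/2) = n*(n-1) := Nat.mul_div_cancel' heven.two_dvd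
    calc s^(n*(n-1)/2) = (r*r)^(n*(n-1)/2) := by rw [hrr]
      _ = r^(2*(n*(n-1)/2)) := by rw [← pow_two, ← pow_mul]
      _ = r^(n*(n-1)) := by rw [h2]
      _ = (r^(n-1))^n := by rw [mul_comm n (n-1), pow_mul]
  have hsqn : Real.sqrt (n:ℝ) ≤ (n:ℝ) := by
    have h1 : (1:ℝ) ≤ (n:ℝ) := by exact_mod_cast hn
    nlinarith [Real.sq_sqrt hn0.le, Real.sqrt_nonneg (n:ℝ)]
  have ha : PC*QC*BC*((n:ℝ) * Real.sqrt (n:ℝ) * r^(n-1)) ≤ c := by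
    have hcast : ((n-1:ℕ):ℝ) + 1 = (n:ℝ) := by
      have h5 : (n-1) + 1 = n := Nat.succ_pred_eq_of_pos hn
      exact_mod_cast h5
    have h1 : (n:ℝ) * Real.sqrt (n:ℝ) ≤ (((n-1:ℕ):ℝ) + 1)^2 := by
      rw [hcast, sq]
      exact mul_le_mul_of_nonneg_left hsqn (by positivity)
    calc PC*QC*BC*((n:ℝ) * Real.sqrt (n:ℝ) * r^(n-1))
        ≤ PC*QC*BC*((((n-1:ℕ):ℝ)+1)^2 * r^(n-1)) := by
          refine mul_le_mul_of_nonneg_left ?_ (by positivity)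
          exact mul_le_mul_of_nonneg_right h1 (by positivity)
      _ = PC*QC*BC*(((n-1:ℕ):ℝ)+1)^2 * r^(n-1) := by ring
      _ ≤ K := hK (n-1)
      _ ≤ c := le_max_right 1 K
  -- final chain
  rw [hdet1]
  have hfac0 : (0:ℝ) < Real.sqrt (n.factorial:ℝ) :=
    Real.sqrt_pos.2 (by exact_mod_cast n.factorial_pos)
  rw [le_div_iff₀ hfac0]
  have habs : |(∏ j, p j) * ((∏ l, q l) * N.det)|
      = (∏ j, p j) * ((∏ l, q l) * |N.det|) := by
    rw [abs_mul, abs_mul, abs_of_nonneg (Finset.prod_nonneg (fun j _ => (hp j).1.le)),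
      abs_of_nonneg (Finset.prod_nonneg (fun l _ => (hq l).1.le))]
  rw [habs]
  have hstep1 : (∏ j, p j) * ((∏ l, q l) * |N.det|)
      ≤ PC^n * (QC^n * ((n.factorial:ℝ) * s^(n*(n-1)/2) * BC^n)) := by
    refine mul_le_mul hprodp ?_ ?_ (by positivity)
    · refine mul_le_mul hprodq hdetN (abs_nonneg _) ?_
      exact pow_nonneg hQC0.le n
    · refine mul_nonneg (Finset.prod_nonneg (fun l _ => (hq l).1.le)) (abs_nonneg _)
  refine le_trans (mul_le_mul_of_nonneg_right hstep1 hfac0.le) ?_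
  calc PC^n * (QC^n * ((n.factorial:ℝ) * s^(n*(n-1)/2) * BC^n)) * Real.sqrt (n.factorial:ℝ)
      ≤ PC^n * (QC^n * ((n:ℝ)^n * (r^(n-1))^n * BC^n)) * (Real.sqrt (n:ℝ))^n := by
        refine mul_le_mul ?_ hsq (Real.sqrt_nonneg _) (by positivity)
        refine mul_le_mul_of_nonneg_left ?_ (by positivity)
        refine mul_le_mul_of_nonneg_left ?_ (by positivity)
        rw [hsD]
        refine mul_le_mul_of_nonneg_right ?_ (by positivity)
        exact mul_le_mul_of_nonneg_right hfn (by positivity)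
    _ = (PC*QC*BC*((n:ℝ) * Real.sqrt (n:ℝ) * r^(n-1)))^n := by
        rw [mul_pow, mul_pow, mul_pow, mul_pow, mul_pow]
        ring
    _ ≤ c^n := pow_le_pow_left₀ (by positivity) ha n
end
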